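/- With 1/μ = −1 − √(1+d) and d_i = Im(d) ≠ 0, the quantities d_i and Im(1/μ) have opposite signs, and consequently Re Q(x,y) ≤ 0 for all (x,y) ∈ ℝ², where Q is the quadratic form Q(x,y) = ½(Kx² + 2Lxy + My²) with K, L, M determined by K = −1 + d·conj(d)·μ/(conj(d) − d), L = −dμ/(conj(d) − d), M = μ/(conj(d) − d). -/

import Mathlib

open Complex

/-- With `1/μ = −1 − √(1+d)` and `d_i ≠ 0`, the quantities `d_i` and `Im(1/μ)` have
opposite signs, and consequently `Re Q(x,y) ≤ 0` for all `(x,y) ∈ ℝ²`, where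
`Q(x,y) = ½(Kx² + 2Lxy + My²)` with the stated `K, L, M`. -/
theorem stmt_6 (d μ K L M : ℂ) (hd : d.im ≠ 0)
    (hbranch : ∀ r : ℝ, r ≤ 0 → 1 + d ≠ (r : ℂ)) (hμ : μ ≠ 0)
    (hμdef : μ⁻¹ = -1 - (1 + d) ^ ((1 : ℂ) / 2))
    (hK : K = -1 + d * (starRingEnd ℂ) d * μ / ((starRingEnd ℂ) d - d))
    (hL : L = -(d * μ) / ((starRingEnd ℂ) d - d))
    (hM : M = μ / ((starRingEnd ℂ) d - d))
    (Q : ℝ → ℝ → ℂ)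
    (hQ : ∀ x y : ℝ, Q x y =
      (K * (x : ℂ) ^ 2 + 2 * L * (x : ℂ) * (y : ℂ) + M * (y : ℂ) ^ 2) / 2) :
    ((0 < d.im → (μ⁻¹).im < 0) ∧ (d.im < 0 → 0 < (μ⁻¹).im)) ∧
    ∀ x y : ℝ, (Q x y).re ≤ 0 := by
  set s : ℂ := (1 + d) ^ ((1 : ℂ) / 2) with hs
  have h1d : (1 + d) ≠ 0 := by
    intro h
    apply hd
    have := congrArg Complex.im h
    simpa using this
  have hs2 : s ^ 2 = 1 + d := by
    rw [hs, one_div]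
    have : ((2 : ℕ) : ℂ)⁻¹ = (2 : ℂ)⁻¹ := by norm_num
    rw [← this]
    exact Complex.cpow_nat_inv_pow _ (by norm_num)
  -- real part of s is positive
  have hargpi : (1 + d).arg ≠ Real.pi := by
    intro h
    rcases Complex.arg_eq_pi_iff.mp h with ⟨_, h2⟩
    apply hd; simpa using h2
  have harglt : (1 + d).arg < Real.pi := lt_of_le_of_ne (Complex.arg_le_pi _) hargpi
  have harggt : -Real.pi < (1 + d).arg := Complex.neg_pi_lt_arg _
  have hsre : 0 < s.re := by
    rw [hs, Complex.cpow_def_of_ne_zero h1d]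
    rw [Complex.exp_re]
    apply mul_pos (Real.exp_pos _)
    have him : (Complex.log (1 + d) * (1 / 2)).im = (1 + d).arg / 2 := by
      simp [Complex.mul_im, Complex.log_im]
      ring
    rw [him]
    apply Real.cos_pos_of_mem_Ioo
    constructor <;> [linarith; linarith]
  set a : ℝ := s.re with ha
  set b : ℝ := s.im with hb
  have hdre : d.re = a ^ 2 - b ^ 2 - 1 := by
    have := congrArg Complex.re hs2
    simp [pow_two, Complex.mul_re] at this
    linarith
  have hdim : d.im = 2 * a * b := by
    have := congrArg Complex.im hs2
    simp [pow_two, Complex.mul_im] at this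
    linarith
  have hbne : b ≠ 0 := by
    intro h; apply hd; rw [hdim, h]; ring
  have hane : a ≠ 0 := ne_of_gt hsre
  -- part 1
  have hinvim : (μ⁻¹).im = -b := by
    rw [hμdef]; simp; rfl
  constructor
  · constructor
    · intro hpos
      rw [hinvim]
      have : 0 < b := by nlinarith [hdim ▸ hpos]
      linarith
    · intro hneg
      rw [hinvim]
      have : b < 0 := by nlinarith [hdim ▸ hneg]
      linarith
  -- part 2
  set N : ℝ := (1 + a) ^ 2 + b ^ 2 with hN
  have hNpos : 0 < N := by positivity
  have hNne : N ≠ 0 := ne_of_gt hNpos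
  have hμeq : μ = (-1 - s)⁻¹ := by
    rw [← hμdef, inv_inv]
  have hμre : μ.re = (-1 - a) / N := by
    rw [hμeq, Complex.inv_re, Complex.normSq_apply]
    simp [hN]
    ring_nf
    rfl
  have hμim : μ.im = b / N := by
    rw [hμeq, Complex.inv_im, Complex.normSq_apply]
    simp [hN]
    ring_nf
    rfl
  have h4ab : (4 * a * b : ℝ) ≠ 0 := by
    simp [hane, hbne]
  have hcdinv : ((starRingEnd ℂ) d - d)⁻¹ = (((4 * a * b : ℝ) : ℂ))⁻¹ * I := by
    have h1 : ((((4 * a * b : ℝ) : ℂ))⁻¹ * I) * ((starRingEnd ℂ) d - d) = 1 := by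
      apply Complex.ext <;>
        simp [Complex.mul_re, Complex.mul_im, hdim] <;> field_simp <;> ring
    exact inv_eq_of_mul_eq_one_left h1
  have hKre : K.re = -N / (4 * a) := by
    rw [hK, div_eq_mul_inv, hcdinv]
    simp [Complex.mul_re, Complex.mul_im, Complex.add_re, Complex.add_im, hdre, hdim, hμre, hμim]
    field_simp
    ring
  have hLre : L.re = -1 / (4 * a) := by
    rw [hL, div_eq_mul_inv, hcdinv]
    simp [Complex.mul_re, Complex.mul_im, Complex.add_re, Complex.add_im, hdre, hdim, hμre, hμim]
    field_simp
    ring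
  have hMre : M.re = -1 / (4 * a * N) := by
    rw [hM, div_eq_mul_inv, hcdinv]
    simp [Complex.mul_re, Complex.mul_im, Complex.add_re, Complex.add_im, hdre, hdim, hμre, hμim]
    field_simp
  intro x y
  have hre : (Q x y).re = -((N * x + y) ^ 2) / (8 * a * N) := by
    rw [hQ]
    simp [Complex.div_re, Complex.add_re, Complex.add_im, Complex.mul_re, Complex.mul_im,
      Complex.normSq_apply, ← Complex.ofReal_pow, hKre, hLre, hMre]
    field_simp
    ring
  rw [hre]
  apply div_nonpos_of_nonpos_of_nonneg
  · simp [sq_nonneg]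
  · positivity
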